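/- Let k ≥ 2 be an integer and let G be a connected simple graph of order n such that d(x) + d(y) ≥ n − k + 1 for every pair of nonadjacent vertices x, y. Then G has a spanning tree with at most k leaves. -/

import Mathlib

open SimpleGraph

/-- The degree of a vertex: the cardinality of its neighborhood. -/
noncomputable def deg {V : Type*} (G : SimpleGraph V) (x : V) : ℕ :=
  (G.neighborSet x).ncard

/-- The number of leaves (vertices of degree 1) of a subgraph. -/
noncomputable def leafCount {V : Type*} {G : SimpleGraph V} (H : G.Subgraph) : ℕ :=
  {v : H.verts | (H.coe.neighborSet v).ncard = 1}.ncard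

/-- `H` is a tree with at most `k` leaves (a `k`-ended tree). -/
def IsEndedTree {V : Type*} {G : SimpleGraph V} (H : G.Subgraph) (k : ℕ) : Prop :=
  H.coe.IsTree ∧ leafCount H ≤ k

/-- `t_k`: the maximum order of a subgraph of `G` that is a tree with at most `k` leaves. -/
noncomputable def treeOrd {V : Type*} (G : SimpleGraph V) (k : ℕ) : ℕ :=
  sSup {m | ∃ H : G.Subgraph, IsEndedTree H k ∧ H.verts.ncard = m}

/-- The number of vertices of a longest path in `G`. -/
noncomputable def pathOrd {V : Type*} (G : SimpleGraph V) : ℕ :=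
  sSup {m | ∃ (u v : V) (p : G.Walk u v), p.IsPath ∧ p.support.length = m}

/-- `s` is an independent set of vertices of `G`. -/
def IsIndep {V : Type*} (G : SimpleGraph V) (s : Set V) : Prop :=
  s.Pairwise fun a b => ¬ G.Adj a b

/-- `σ₃`: the minimum degree sum over independent triples of vertices. -/
noncomputable def sigma3 {V : Type*} (G : SimpleGraph V) : ℕ :=
  sInf {s | ∃ x y z : V, x ≠ y ∧ x ≠ z ∧ y ≠ z ∧
    ¬G.Adj x y ∧ ¬G.Adj x z ∧ ¬G.Adj y z ∧ s = deg G x + deg G y + deg G z}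

set_option linter.unusedSectionVars false

namespace BT
variable {V : Type*} {G : SimpleGraph V}




/-- degree of a vertex within a subgraph, measured in `V`. -/
noncomputable abbrev dS (T : G.Subgraph) (v : V) : ℕ := (T.neighborSet v).ncard

/-- leaves of a subgraph, as a set in `V`. -/
def leaves (T : G.Subgraph) : Set V := {v | v ∈ T.verts ∧ dS T v = 1}

lemma isAcyclic_anti {A B : SimpleGraph V} (h : A ≤ B) (hB : B.IsAcyclic) : A.IsAcyclic :=
  fun _ c hc => hB (c.mapLe h) (hc.mapLe h)

lemma isAcyclic_sup_edge {A : SimpleGraph V} {x u : V} (hA : A.IsAcyclic)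
    (hne : x ≠ u) (hr : ¬ A.Reachable x u) :
    (A ⊔ fromEdgeSet {s(x,u)}).IsAcyclic := by
  have hle : (A ⊔ fromEdgeSet {s(x,u)}) \ fromEdgeSet {s(x,u)} ≤ A := by
    intro a b hab
    rw [sdiff_adj, sup_adj] at hab
    rcases hab with ⟨h1 | h1, h2⟩
    · exact h1
    · exact absurd h1 h2
  have hbr : (A ⊔ fromEdgeSet {s(x,u)}).IsBridge s(x,u) := by
    rw [isBridge_iff]
    exact fun hr' => hr (hr'.mono hle)
  intro v c hc
  have hne' : s(x,u) ∉ c.edges :=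
    (isBridge_iff_forall_cycle_notMem (show (A ⊔ fromEdgeSet {s(x,u)}).Adj x u from
      Or.inr (by simp [fromEdgeSet_adj, hne]))).1 hbr c hc
  have hsub : ∀ e ∈ c.edges, e ∈ A.edgeSet := by
    intro e he
    have := c.edges_subset_edgeSet he
    rw [edgeSet_sup] at this
    rcases this with h | h
    · exact h
    · rw [edgeSet_fromEdgeSet] at h
      rcases h with ⟨h1, _⟩
      rw [Set.mem_singleton_iff] at h1
      exact absurd (h1 ▸ he) hne'
  exact hA (c.transfer A hsub) (hc.transfer hsub)

lemma reachable_deleteEdges_aux {A : SimpleGraph V} {p u z q : V} (w : A.Walk z q) :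
    (A.deleteEdges {s(p,u)}).Reachable z q ∨ (A.deleteEdges {s(p,u)}).Reachable z p ∨
      (A.deleteEdges {s(p,u)}).Reachable z u := by
  induction w with
  | nil => exact Or.inl (Reachable.refl _)
  | @cons a b _ h q ih =>
    by_cases he : s(a, b) = s(p, u)
    · rw [Sym2.eq_iff] at he
      rcases he with ⟨rfl, rfl⟩ | ⟨rfl, rfl⟩
      · exact Or.inr (Or.inl (Reachable.refl _))
      · exact Or.inr (Or.inr (Reachable.refl _))
    · have hadj : (A.deleteEdges {s(p,u)}).Adj a b := by
        rw [deleteEdges_adj]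
        exact ⟨h, by simpa using he⟩
      rcases ih with h' | h' | h'
      · exact Or.inl (hadj.reachable.trans h')
      · exact Or.inr (Or.inl (hadj.reachable.trans h'))
      · exact Or.inr (Or.inr (hadj.reachable.trans h'))

lemma reachable_deleteEdges {A : SimpleGraph V} {p u z : V} (hz : A.Reachable z p) :
    (A.deleteEdges {s(p,u)}).Reachable z p ∨ (A.deleteEdges {s(p,u)}).Reachable z u := by
  obtain ⟨w⟩ := hz
  rcases reachable_deleteEdges_aux (p := p) (u := u) w with h | h | h
  · exact Or.inl h
  · exact Or.inl h
  · exact Or.inr h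

/-- hom from coe to spanningCoe -/
def homSC (T : G.Subgraph) : T.coe →g T.spanningCoe where
  toFun := Subtype.val
  map_rel' := fun h => h

lemma homSC_inj (T : G.Subgraph) : Function.Injective (homSC T) := Subtype.val_injective

lemma spanning_reach_of_coe {T : G.Subgraph} {a b : T.verts} (h : T.coe.Reachable a b) :
    T.spanningCoe.Reachable ↑a ↑b := h.map (homSC T)

lemma coe_reach_of_spanning {T : G.Subgraph} {a b : V} (w : T.spanningCoe.Walk a b) :
    ∀ (ha : a ∈ T.verts) (hb : b ∈ T.verts), T.coe.Reachable ⟨a, ha⟩ ⟨b, hb⟩ := by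
  induction w with
  | nil => intro ha hb; rfl
  | @cons c d _ h q ih =>
    intro ha hb
    have hd : d ∈ T.verts := T.edge_vert (T.adj_symm h)
    have hadj : T.coe.Adj ⟨c, ha⟩ ⟨d, hd⟩ := h
    exact hadj.reachable.trans (ih hd hb)

lemma not_reach_of_not_mem {T : G.Subgraph} {a w : V} (hw : w ∉ T.verts) (hne : a ≠ w) :
    ¬ T.spanningCoe.Reachable a w := by
  intro hr
  obtain ⟨q⟩ := hr.symm
  cases q with
  | nil => exact hne rfl
  | cons h _ => exact hw (T.edge_vert h)

lemma coe_isTree {T : G.Subgraph} (hc : T.Connected) (hac : T.spanningCoe.IsAcyclic) :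
    T.coe.IsTree :=
  ⟨hc.coe, fun _ c hcy => hac (c.map (homSC T)) (hcy.map (homSC_inj T))⟩

lemma nbr_nonempty {T : G.Subgraph} (hc : T.Connected) {a b : V} (ha : a ∈ T.verts)
    (hb : b ∈ T.verts) (hab : a ≠ b) : (T.neighborSet a).Nonempty := by
  have hr : T.coe.Reachable ⟨a, ha⟩ ⟨b, hb⟩ := hc.coe.preconnected _ _
  obtain ⟨wk⟩ := hr
  have hlen : 0 < wk.length := by
    rcases Nat.eq_zero_or_pos wk.length with h | h
    · exact absurd (congrArg Subtype.val (wk.eq_of_length_eq_zero h)) hab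
    · exact h
  have := wk.adj_getVert_succ (i := 0) hlen
  rw [Walk.getVert_zero] at this
  exact ⟨_, this⟩


variable [Fintype V]

lemma attach_lemma {T : G.Subgraph} (hc : T.Connected) (hac : T.spanningCoe.IsAcyclic)
    {a w : V} (hadj : G.Adj a w) (ha : a ∈ T.verts) (hw : w ∉ T.verts) :
    (T ⊔ G.subgraphOfAdj hadj).Connected ∧
    (T ⊔ G.subgraphOfAdj hadj).spanningCoe.IsAcyclic ∧
    (T ⊔ G.subgraphOfAdj hadj).verts = insert w T.verts ∧
    leaves (T ⊔ G.subgraphOfAdj hadj) ⊆ insert w (insert a (leaves T)) ∧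
    (1 ≤ dS T a → leaves (T ⊔ G.subgraphOfAdj hadj) ⊆ insert w (leaves T \ {a})) := by
  set T' := T ⊔ G.subgraphOfAdj hadj with hT'
  have hwa : w ≠ a := fun h => hw (h ▸ ha)
  have hAdj : ∀ z y, T'.Adj z y ↔ T.Adj z y ∨ (z = a ∧ y = w) ∨ (z = w ∧ y = a) := by
    intro z y
    rw [hT', Subgraph.sup_adj, subgraphOfAdj_adj, Sym2.eq_iff]
    tauto
  have hverts : T'.verts = insert w T.verts := by
    rw [hT', Subgraph.verts_sup, subgraphOfAdj_verts]
    ext z; simp only [Set.mem_union, Set.mem_insert_iff, Set.mem_singleton_iff]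
    constructor
    · rintro (h | h | h)
      · exact Or.inr h
      · exact Or.inr (h ▸ ha)
      · exact Or.inl h
    · rintro (h | h)
      · exact Or.inr (Or.inr h)
      · exact Or.inl h
  have hconn : T'.Connected := by
    refine Subgraph.connected_sup hc.preconnected
      (Subgraph.subgraphOfAdj_connected hadj).preconnected ⟨a, ?_⟩
    simp [ha]
  have hnw : ∀ y, y ∉ T.verts → T.neighborSet y = ∅ := by
    intro y hy; ext z
    simp only [Subgraph.mem_neighborSet, Set.mem_empty_iff_false, iff_false]
    exact fun h => hy (T.edge_vert h)
  have hnbrw : T'.neighborSet w = {a} := by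
    ext y
    simp only [Subgraph.mem_neighborSet, Set.mem_singleton_iff]
    rw [hAdj]
    constructor
    · rintro (h | ⟨h1, _⟩ | ⟨_, h2⟩)
      · exact absurd (T.edge_vert h) hw
      · exact absurd h1 hwa
      · exact h2
    · rintro rfl; tauto
  have hnbra : T'.neighborSet a = insert w (T.neighborSet a) := by
    ext y
    simp only [Subgraph.mem_neighborSet, Set.mem_insert_iff]
    rw [hAdj]
    constructor
    · rintro (h | ⟨_, h2⟩ | ⟨h1, _⟩)
      · tauto
      · tauto
      · exact absurd h1 hwa.symm
    · rintro (rfl | h) <;> tauto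
  have hnbrz : ∀ z, z ≠ a → z ≠ w → T'.neighborSet z = T.neighborSet z := by
    intro z hza hzw
    ext y
    simp only [Subgraph.mem_neighborSet]
    rw [hAdj]
    constructor
    · rintro (h | ⟨h1, _⟩ | ⟨h1, _⟩)
      · exact h
      · exact absurd h1 hza
      · exact absurd h1 hzw
    · tauto
  have hdw : dS T' w = 1 := by simp only [dS, hnbrw]; exact Set.ncard_singleton _
  have hda : dS T' a = dS T a + 1 := by
    have hwna : w ∉ T.neighborSet a := fun h => hw (T.edge_vert (T.adj_symm h))
    simp only [dS, hnbra]
    rw [Set.ncard_insert_of_notMem hwna (Set.toFinite _)]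
  -- acyclicity
  have hsc : T'.spanningCoe = T.spanningCoe ⊔ fromEdgeSet {s(a,w)} := by
    ext z y
    rw [Subgraph.spanningCoe_adj, hAdj z y, sup_adj, Subgraph.spanningCoe_adj,
      fromEdgeSet_adj, Set.mem_singleton_iff, Sym2.eq_iff]
    constructor
    · rintro (h | ⟨rfl, rfl⟩ | ⟨rfl, rfl⟩)
      · tauto
      · exact Or.inr ⟨by tauto, hadj.ne⟩
      · exact Or.inr ⟨by tauto, hadj.ne'⟩
    · rintro (h | ⟨h1, _⟩)
      · tauto
      · tauto
  have hacy : T'.spanningCoe.IsAcyclic := by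
    rw [hsc]
    exact isAcyclic_sup_edge hac hadj.ne (not_reach_of_not_mem hw hadj.ne)
  refine ⟨hconn, hacy, hverts, ?_, ?_⟩
  · rintro z ⟨hzv, hz1⟩
    by_cases hzw : z = w
    · exact Or.inl hzw
    by_cases hza : z = a
    · exact Or.inr (Or.inl hza)
    · refine Or.inr (Or.inr ⟨?_, ?_⟩)
      · rw [hverts] at hzv; rcases hzv with h | h; exact absurd h hzw; exact h
      · simp only [dS] at hz1 ⊢; rwa [← hnbrz z hza hzw]
  · intro hdapos
    rintro z ⟨hzv, hz1⟩
    by_cases hzw : z = w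
    · exact Or.inl hzw
    by_cases hza : z = a
    · subst hza
      rw [hda] at hz1
      omega
    · refine Or.inr ⟨⟨?_, ?_⟩, hza⟩
      · rw [hverts] at hzv; rcases hzv with h | h; exact absurd h hzw; exact h
      · simp only [dS] at hz1 ⊢; rwa [← hnbrz z hza hzw]

lemma exchange_lemma {T : G.Subgraph} (hc : T.Connected) (hac : T.spanningCoe.IsAcyclic)
    {x u p : V} (hxu : G.Adj x u) (hpu : T.Adj p u) (hnadj : ¬ T.Adj x u) (hpx : p ≠ x)
    (hx : x ∈ T.verts)
    (hreach : (T.spanningCoe.deleteEdges {s(p,u)}).Reachable x p) :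
    (T.deleteEdges {s(p,u)} ⊔ G.subgraphOfAdj hxu).Connected ∧
    (T.deleteEdges {s(p,u)} ⊔ G.subgraphOfAdj hxu).spanningCoe.IsAcyclic ∧
    (T.deleteEdges {s(p,u)} ⊔ G.subgraphOfAdj hxu).verts = T.verts ∧
    dS (T.deleteEdges {s(p,u)} ⊔ G.subgraphOfAdj hxu) x = dS T x + 1 ∧
    dS (T.deleteEdges {s(p,u)} ⊔ G.subgraphOfAdj hxu) u = dS T u ∧
    dS (T.deleteEdges {s(p,u)} ⊔ G.subgraphOfAdj hxu) p = dS T p - 1 ∧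
    (∀ z, z ≠ x → z ≠ u → z ≠ p →
      (T.deleteEdges {s(p,u)} ⊔ G.subgraphOfAdj hxu).neighborSet z = T.neighborSet z) := by
  set T2 := T.deleteEdges {s(p,u)} ⊔ G.subgraphOfAdj hxu with hT2
  have hxune : x ≠ u := hxu.ne
  have hpune : p ≠ u := (T.adj_sub hpu).ne
  have hu : u ∈ T.verts := T.edge_vert (T.adj_symm hpu)
  have hp : p ∈ T.verts := T.edge_vert hpu
  have hnadj' : ¬ T.Adj u x := fun h => hnadj (T.adj_symm h)
  have hAdj : ∀ z y, T2.Adj z y ↔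
      (T.Adj z y ∧ ¬(z = p ∧ y = u) ∧ ¬(z = u ∧ y = p)) ∨ (z = x ∧ y = u) ∨ (z = u ∧ y = x) := by
    intro z y
    rw [hT2, Subgraph.sup_adj, Subgraph.deleteEdges_adj, Set.mem_singleton_iff, Sym2.eq_iff,
      subgraphOfAdj_adj, Sym2.eq_iff]
    constructor
    · rintro (⟨h1, h2⟩ | (⟨rfl, rfl⟩ | ⟨rfl, rfl⟩))
      · exact Or.inl ⟨h1, fun h => h2 (Or.inl h), fun h => h2 (Or.inr h)⟩
      · exact Or.inr (Or.inl ⟨rfl, rfl⟩)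
      · exact Or.inr (Or.inr ⟨rfl, rfl⟩)
    · rintro (⟨h1, h2, h3⟩ | (⟨rfl, rfl⟩ | ⟨rfl, rfl⟩))
      · exact Or.inl ⟨h1, fun h => h.elim h2 h3⟩
      · exact Or.inr (Or.inl ⟨rfl, rfl⟩)
      · exact Or.inr (Or.inr ⟨rfl, rfl⟩)
  have hvv : T2.verts = T.verts := by
    rw [hT2, Subgraph.verts_sup, Subgraph.deleteEdges_verts, subgraphOfAdj_verts]
    rw [Set.union_eq_self_of_subset_right]
    intro z hz
    simp only [Set.mem_insert_iff, Set.mem_singleton_iff] at hz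
    rcases hz with rfl | rfl
    · exact hx
    · exact hu
  have hsc : T2.spanningCoe = T.spanningCoe.deleteEdges {s(p,u)} ⊔ fromEdgeSet {s(x,u)} := by
    ext z y
    rw [Subgraph.spanningCoe_adj, hAdj z y, sup_adj, deleteEdges_adj,
      Subgraph.spanningCoe_adj, Set.mem_singleton_iff, Sym2.eq_iff, fromEdgeSet_adj,
      Set.mem_singleton_iff, Sym2.eq_iff]
    constructor
    · rintro (⟨h1, h2, h3⟩ | (⟨rfl, rfl⟩ | ⟨rfl, rfl⟩))
      · exact Or.inl ⟨h1, fun h => h.elim h2 h3⟩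
      · exact Or.inr ⟨Or.inl ⟨rfl, rfl⟩, hxune⟩
      · exact Or.inr ⟨Or.inr ⟨rfl, rfl⟩, hxune.symm⟩
    · rintro (⟨h1, h2⟩ | ⟨(⟨rfl, rfl⟩ | ⟨rfl, rfl⟩), _⟩)
      · exact Or.inl ⟨h1, fun h => h2 (Or.inl h), fun h => h2 (Or.inr h)⟩
      · exact Or.inr (Or.inl ⟨rfl, rfl⟩)
      · exact Or.inr (Or.inr ⟨rfl, rfl⟩)
  have hKac : (T.spanningCoe.deleteEdges {s(p,u)}).IsAcyclic :=
    isAcyclic_anti (deleteEdges_le _) hac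
  have hbr : ¬ (T.spanningCoe.deleteEdges {s(p,u)}).Reachable p u := by
    have h1 := isAcyclic_iff_forall_adj_isBridge.1 hac (show T.spanningCoe.Adj p u from hpu)
    exact isBridge_iff.1 h1
  have hnru : ¬ (T.spanningCoe.deleteEdges {s(p,u)}).Reachable x u :=
    fun h => hbr ((hreach.symm.trans h))
  have hacy : T2.spanningCoe.IsAcyclic := by
    rw [hsc]
    exact isAcyclic_sup_edge hKac hxune hnru
  have hKle : T.spanningCoe.deleteEdges {s(p,u)} ≤ T2.spanningCoe := by
    rw [hsc]; exact le_sup_left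
  have hreach2 : ∀ z ∈ T.verts, T2.spanningCoe.Reachable z x := by
    intro z hz
    have h0 : T.spanningCoe.Reachable z p :=
      spanning_reach_of_coe (hc.coe.preconnected ⟨z, hz⟩ ⟨p, hp⟩)
    have hux : T2.spanningCoe.Adj u x := by
      rw [Subgraph.spanningCoe_adj, hAdj]
      exact Or.inr (Or.inr ⟨rfl, rfl⟩)
    rcases reachable_deleteEdges (u := u) h0 with h | h
    · exact (h.mono hKle).trans ((hreach.symm).mono hKle)
    · exact (h.mono hKle).trans hux.reachable
  have hconn2 : T2.Connected := by
    rw [Subgraph.connected_iff]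
    refine ⟨⟨fun a b => ?_⟩, by rw [hvv]; exact ⟨x, hx⟩⟩
    have ha' : (a : V) ∈ T.verts := by rw [← hvv]; exact a.2
    have hb' : (b : V) ∈ T.verts := by rw [← hvv]; exact b.2
    obtain ⟨wlk⟩ := (hreach2 a ha').trans (hreach2 b hb').symm
    exact coe_reach_of_spanning wlk a.2 b.2
  have hnx : T2.neighborSet x = insert u (T.neighborSet x) := by
    ext y
    simp only [Subgraph.mem_neighborSet, Set.mem_insert_iff]
    rw [hAdj]
    constructor
    · rintro (⟨h1, _, _⟩ | (⟨_, rfl⟩ | ⟨h1, _⟩))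
      · exact Or.inr h1
      · exact Or.inl rfl
      · exact absurd h1 hxune
    · rintro (rfl | h)
      · exact Or.inr (Or.inl ⟨rfl, rfl⟩)
      · exact Or.inl ⟨h, fun hh => hpx (hh.1.symm), fun hh => hxune hh.1⟩
  have hnu : T2.neighborSet u = insert x (T.neighborSet u \ {p}) := by
    ext y
    simp only [Subgraph.mem_neighborSet, Set.mem_insert_iff, Set.mem_diff,
      Set.mem_singleton_iff]
    rw [hAdj]
    constructor
    · rintro (⟨h1, _, h3⟩ | (⟨h1, _⟩ | ⟨_, rfl⟩))
      · exact Or.inr ⟨h1, fun hh => h3 ⟨rfl, hh⟩⟩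
      · exact absurd h1 hxune.symm
      · exact Or.inl rfl
    · rintro (rfl | ⟨h1, h2⟩)
      · exact Or.inr (Or.inr ⟨rfl, rfl⟩)
      · exact Or.inl ⟨h1, fun hh => hpune hh.1.symm, fun hh => h2 hh.2⟩
  have hnp : T2.neighborSet p = T.neighborSet p \ {u} := by
    ext y
    simp only [Subgraph.mem_neighborSet, Set.mem_diff, Set.mem_singleton_iff]
    rw [hAdj]
    constructor
    · rintro (⟨h1, h2, _⟩ | (⟨h1, _⟩ | ⟨h1, _⟩))
      · exact ⟨h1, fun hh => h2 ⟨rfl, hh⟩⟩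
      · exact absurd h1 hpx
      · exact absurd h1 hpune
    · rintro ⟨h1, h2⟩
      exact Or.inl ⟨h1, fun hh => h2 hh.2, fun hh => hpune hh.1⟩
  have hnz : ∀ z, z ≠ x → z ≠ u → z ≠ p → T2.neighborSet z = T.neighborSet z := by
    intro z hzx hzu hzp
    ext y
    simp only [Subgraph.mem_neighborSet]
    rw [hAdj]
    constructor
    · rintro (⟨h1, _, _⟩ | (⟨h1, _⟩ | ⟨h1, _⟩))
      · exact h1
      · exact absurd h1 hzx
      · exact absurd h1 hzu
    · intro h
      exact Or.inl ⟨h, fun hh => hzp hh.1, fun hh => hzu hh.1⟩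
  have hdsx : dS T2 x = dS T x + 1 := by
    have hnmem : u ∉ T.neighborSet x := hnadj
    simp only [dS, hnx]
    rw [Set.ncard_insert_of_notMem hnmem (Set.toFinite _)]
  have hdsp : dS T2 p = dS T p - 1 := by
    have hmem : u ∈ T.neighborSet p := hpu
    simp only [dS, hnp]
    rw [Set.ncard_diff_singleton_of_mem hmem]
  have hdsu : dS T2 u = dS T u := by
    have hmem : p ∈ T.neighborSet u := T.adj_symm hpu
    have hpos : 0 < (T.neighborSet u).ncard := by
      rw [Set.ncard_pos (Set.toFinite _)]
      exact ⟨p, hmem⟩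
    have hxn : x ∉ T.neighborSet u \ {p} := fun h => hnadj' h.1
    simp only [dS, hnu]
    rw [Set.ncard_insert_of_notMem hxn (Set.toFinite _),
      Set.ncard_diff_singleton_of_mem hmem]
    omega
  exact ⟨hconn2, hacy, hvv, hdsx, hdsu, hdsp, hnz⟩

lemma parent_facts {T : G.Subgraph} (htree : T.coe.IsTree)
    {b a : T.verts} (hne : b ≠ a) (P : T.coe.Walk b a) (hP : P.IsPath) :
    T.Adj ↑(P.getVert 1) ↑b ∧
    (T.Adj ↑a ↑b → P.getVert 1 = a) ∧
    (P.getVert 1 ≠ a → 2 ≤ dS T ↑(P.getVert 1)) ∧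
    (T.spanningCoe.deleteEdges {s(↑(P.getVert 1), ↑b)}).Reachable ↑a ↑(P.getVert 1) := by
  obtain ⟨c, h, q, rfl⟩ : ∃ (c : T.verts) (h : T.coe.Adj b c) (q : T.coe.Walk c a),
      P = Walk.cons h q := by
    cases P with
    | nil => exact absurd rfl hne
    | cons h q => exact ⟨_, h, q, rfl⟩
  have hgv : (Walk.cons h q).getVert 1 = c := by
    rw [Walk.getVert_cons_succ]; exact Walk.getVert_zero q
  rw [hgv]
  obtain ⟨hq, hbq⟩ := (Walk.cons_isPath_iff h q).1 hP
  have hTbc : T.Adj ↑b ↑c := h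
  refine ⟨T.adj_symm hTbc, ?_, ?_, ?_⟩
  · intro hab
    have hW : (Walk.cons (show T.coe.Adj b a from T.adj_symm hab)
        (Walk.nil : T.coe.Walk a a)).IsPath := by
      rw [Walk.cons_isPath_iff]
      refine ⟨Walk.IsPath.nil, ?_⟩
      simp only [Walk.support_nil, List.mem_singleton]
      exact hne
    obtain ⟨p0, _, huniq⟩ := htree.existsUnique_path b a
    have e1 := huniq _ hP
    have e2 := huniq _ hW
    have e3 := e1.trans e2.symm
    have := congrArg (fun (W : T.coe.Walk b a) => W.getVert 1) e3
    rw [hgv] at this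
    rw [this, Walk.getVert_cons_succ, Walk.getVert_zero]
  · intro hca
    obtain ⟨d, h2, q2, rfl⟩ : ∃ (d : T.verts) (h2 : T.coe.Adj c d) (q2 : T.coe.Walk d a),
        q = Walk.cons h2 q2 := by
      cases q with
      | nil => exact absurd rfl hca
      | cons h2 q2 => exact ⟨_, h2, q2, rfl⟩
    have hbd : b ≠ d := by
      intro hbd
      apply hbq
      rw [Walk.support_cons]
      exact List.mem_cons_of_mem _ (hbd ▸ q2.start_mem_support)
    have hsub : ({(↑b : V), ↑d} : Set V) ⊆ T.neighborSet ↑c := by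
      rintro z (rfl | rfl)
      · exact T.adj_symm hTbc
      · exact h2
    have h2le : 2 ≤ ({(↑b : V), ↑d} : Set V).ncard := by
      rw [Set.ncard_pair (fun hh => hbd (Subtype.val_injective hh))]
    exact le_trans h2le (Set.ncard_le_ncard hsub (Set.toFinite _))
  · have hedge : s((↑c : V), ↑b) ∉ (q.map (homSC T)).edges := by
      intro hmem
      rw [Walk.edges_map, List.mem_map] at hmem
      obtain ⟨e, he, hmape⟩ := hmem
      induction e with
      | h e1 e2 =>
        simp only [Sym2.map_pair_eq, Sym2.eq_iff] at hmape
        apply hbq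
        rcases hmape with ⟨_, hb2⟩ | ⟨hb1, _⟩
        · have : e2 = b := Subtype.val_injective hb2
          exact this ▸ Walk.snd_mem_support_of_mem_edges q he
        · have : e1 = b := Subtype.val_injective hb1
          exact this ▸ Walk.fst_mem_support_of_mem_edges q he
    have hq' : ∀ e ∈ (q.map (homSC T)).edges, e ∉ ({s((↑c : V), ↑b)} : Set (Sym2 V)) := by
      intro e he hmem
      rw [Set.mem_singleton_iff] at hmem
      exact hedge (hmem ▸ he)
    exact ⟨((q.map (homSC T)).toDeleteEdges _ hq').reverse⟩

lemma triple_ncard_le {s : Set V} {v1 v2 v3 : V} (h1 : v1 ∈ s) (h2 : v2 ∈ s) (h3 : v3 ∈ s)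
    (h12 : v1 ≠ v2) (h13 : v1 ≠ v3) (h23 : v2 ≠ v3) : 3 ≤ s.ncard := by
  have hsub : ({v1, v2, v3} : Set V) ⊆ s := by rintro z (rfl | rfl | rfl) <;> assumption
  have : ({v1, v2, v3} : Set V).ncard = 3 := by
    rw [Set.ncard_insert_of_notMem (by simp [h12, h13]) (Set.toFinite _),
      Set.ncard_pair h23]
  exact this ▸ Set.ncard_le_ncard hsub (Set.toFinite _)

lemma parent_inj {T : G.Subgraph} (htree : T.coe.IsTree) {a b1 b2 : T.verts}
    (hne1 : b1 ≠ a) (hne2 : b2 ≠ a) (h12 : b1 ≠ b2)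
    (P1 : T.coe.Walk b1 a) (hP1 : P1.IsPath) (P2 : T.coe.Walk b2 a) (hP2 : P2.IsPath)
    (hpp : P1.getVert 1 = P2.getVert 1) (hpa : P1.getVert 1 ≠ a) :
    3 ≤ dS T ↑(P1.getVert 1) := by
  obtain ⟨c, h, q, rfl⟩ : ∃ (c : T.verts) (h : T.coe.Adj b1 c) (q : T.coe.Walk c a),
      P1 = Walk.cons h q := by
    cases P1 with
    | nil => exact absurd rfl hne1
    | cons h q => exact ⟨_, h, q, rfl⟩
  obtain ⟨c2, g2, q2, rfl⟩ : ∃ (c2 : T.verts) (g2 : T.coe.Adj b2 c2) (q2 : T.coe.Walk c2 a),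
      P2 = Walk.cons g2 q2 := by
    cases P2 with
    | nil => exact absurd rfl hne2
    | cons g q => exact ⟨_, g, q, rfl⟩
  have hgv1 : (Walk.cons h q).getVert 1 = c := by
    rw [Walk.getVert_cons_succ]; exact Walk.getVert_zero q
  have hgv2 : (Walk.cons g2 q2).getVert 1 = c2 := by
    rw [Walk.getVert_cons_succ]; exact Walk.getVert_zero q2
  rw [hgv1, hgv2] at hpp
  rw [hgv1] at hpa ⊢
  subst hpp
  obtain ⟨hq, hbq⟩ := (Walk.cons_isPath_iff h q).1 hP1
  obtain ⟨hq2, hbq2⟩ := (Walk.cons_isPath_iff g2 q2).1 hP2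
  obtain ⟨d, h3, q3, rfl⟩ : ∃ (d : T.verts) (h3 : T.coe.Adj c d) (q3 : T.coe.Walk d a),
      q = Walk.cons h3 q3 := by
    cases q with
    | nil => exact absurd rfl hpa
    | cons h3 q3 => exact ⟨_, h3, q3, rfl⟩
  obtain ⟨hq3, hcq3⟩ := (Walk.cons_isPath_iff h3 q3).1 hq
  have hbd : b1 ≠ d := by
    intro hbd
    apply hbq
    rw [Walk.support_cons]
    exact List.mem_cons_of_mem _ (hbd ▸ q3.start_mem_support)
  have hb2d : b2 ≠ d := by
    intro hb2d
    subst hb2d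
    obtain ⟨p0, _, huniq⟩ := htree.existsUnique_path b2 a
    have e1 := huniq _ hP2
    have e2 := huniq _ hq3
    have e3 := e2.trans e1.symm
    have hcsup : c ∈ (Walk.cons g2 q2).support := by
      rw [Walk.support_cons]
      exact List.mem_cons_of_mem _ q2.start_mem_support
    rw [← e3] at hcsup
    exact hcq3 hcsup
  exact triple_ncard_le (T.adj_symm (show T.Adj ↑b1 ↑c from h))
    (T.adj_symm (show T.Adj ↑b2 ↑c from g2)) (show T.Adj ↑c ↑d from h3)
    (fun hh => h12 (Subtype.val_injective hh))
    (fun hh => hbd (Subtype.val_injective hh))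
    (fun hh => hb2d (Subtype.val_injective hh))

/-- degree in G (same as `deg` in the main file) -/
noncomputable def degG (G : SimpleGraph V) (x : V) : ℕ := (G.neighborSet x).ncard

lemma grow (k : ℕ) (hk : 2 ≤ k) (hGc : G.Connected)
    (hdeg : ∀ x y : V, x ≠ y → ¬ G.Adj x y →
      (Fintype.card V : ℤ) - k + 1 ≤ (degG G x : ℤ) + degG G y)
    (T : G.Subgraph) (hc : T.Connected) (hac : T.spanningCoe.IsAcyclic)
    (hl : (leaves T).ncard ≤ k) (hns : ¬ T.IsSpanning) :
    ∃ T' : G.Subgraph, T'.Connected ∧ T'.spanningCoe.IsAcyclic ∧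
      (leaves T').ncard ≤ k ∧ T.verts ⊂ T'.verts := by
  classical
  obtain ⟨w0, hw0⟩ : ∃ w0, w0 ∉ T.verts := by
    by_contra hcon; push_neg at hcon; exact hns hcon
  obtain ⟨v0, hv0⟩ := hc.nonempty
  obtain ⟨pw⟩ := hGc.preconnected v0 w0
  obtain ⟨dart, _, hdv, hdw⟩ := pw.exists_boundary_dart T.verts hv0 hw0
  set v := dart.toProd.1 with hvdef
  set w := dart.toProd.2 with hwdef
  have hvw : G.Adj v w := dart.adj
  by_cases hsmall : (leaves T).ncard < k
  · -- just attach w at v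
    obtain ⟨hc', hac', hverts', hsub1, hsub2⟩ := attach_lemma hc hac hvw hdv hdw
    refine ⟨_, hc', hac', ?_, by rw [hverts']; exact Set.ssubset_insert hdw⟩
    by_cases hone : 1 ≤ dS T v
    · have h1 := Set.ncard_le_ncard (hsub2 hone) (Set.toFinite _)
      have h2 := Set.ncard_insert_le w (leaves T \ {v})
      have h3 := Set.ncard_le_ncard (Set.diff_subset (s := leaves T) (t := {v})) (Set.toFinite _)
      linarith

    · -- v is isolated, so T = {v} and leaves T = ∅
      have hdv0 : dS T v = 0 := Nat.lt_one_iff.mp (Nat.not_le.mp hone)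
      have hsing : ∀ b ∈ T.verts, b = v := by
        intro b hb
        by_contra hbv
        obtain ⟨z, hz⟩ := nbr_nonempty hc hdv hb (fun hh => hbv hh.symm)
        have : (T.neighborSet v).Nonempty := ⟨z, hz⟩
        rw [← Set.ncard_pos (Set.toFinite _)] at this
        exact (Nat.pos_iff_ne_zero.mp this) hdv0
      have hLempty : leaves T = ∅ := by
        ext z
        simp only [Set.mem_empty_iff_false, iff_false]
        rintro ⟨hzv, hz1⟩
        rw [hsing z hzv] at hz1
        omega
      have h1 := Set.ncard_le_ncard hsub1 (Set.toFinite _)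
      rw [hLempty] at h1
      have h2 := Set.ncard_insert_le w (insert v (∅ : Set V))
      have h3 := Set.ncard_insert_le v (∅ : Set V)
      rw [Set.ncard_empty] at h3
      omega
  have hkeq : (leaves T).ncard = k := le_antisymm hl (not_lt.1 hsmall)
  by_cases hout : ∃ y ∈ leaves T, ∃ z, G.Adj y z ∧ z ∉ T.verts
  · obtain ⟨y, hyL, z, hyz, hz⟩ := hout
    obtain ⟨hc', hac', hverts', _, hsub2⟩ := attach_lemma hc hac hyz hyL.1 hz
    refine ⟨_, hc', hac', ?_, by rw [hverts']; exact Set.ssubset_insert hz⟩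
    have h1 := Set.ncard_le_ncard (hsub2 (by rw [hyL.2])) (Set.toFinite _)
    have h2 := Set.ncard_insert_le z (leaves T \ {y})
    have h3 := Set.ncard_diff_singleton_of_mem hyL
    omega
  push_neg at hout
  obtain ⟨x, hxL⟩ : (leaves T).Nonempty := by
    apply Set.nonempty_of_ncard_ne_zero; omega
  have hxT : x ∈ T.verts := hxL.1
  have hdx : dS T x = 1 := hxL.2
  have htree := coe_isTree hc hac
  set N := G.neighborSet x with hN
  have hNT : ∀ u ∈ N, u ∈ T.verts := fun u hu => hout x hxL u hu
  have hNx : ∀ u ∈ N, u ≠ x := fun u hu => (hu : G.Adj x u).ne'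
  have hxw : ¬ G.Adj x w := fun h => hdw (hNT w h)
  have hxnew : x ≠ w := fun h => hdw (h ▸ hxT)
  have hchoice : ∀ u, ∀ h : u ∈ N, ∃ P : T.coe.Walk ⟨u, hNT u h⟩ ⟨x, hxT⟩, P.IsPath := by
    intro u h
    obtain ⟨w1⟩ := hc.coe.preconnected ⟨u, hNT u h⟩ ⟨x, hxT⟩
    exact ⟨w1.toPath.1, w1.toPath.2⟩
  choose Pp hPp using hchoice
  set pm : V → V := fun u => if h : u ∈ N then ((Pp u h).getVert 1 : T.verts) else x with hpmdef
  have hpm : ∀ u (h : u ∈ N), pm u = ↑((Pp u h).getVert 1) := by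
    intro u h
    rw [hpmdef]
    simp only [dif_pos h]
  have hbne : ∀ u (h : u ∈ N), (⟨u, hNT u h⟩ : T.verts) ≠ ⟨x, hxT⟩ := by
    intro u h heq; exact hNx u h (congrArg Subtype.val heq)
  have hpf := fun u (h : u ∈ N) => parent_facts htree (hbne u h) (Pp u h) (hPp u h)
  have hpmT : ∀ u (h : u ∈ N), pm u ∈ T.verts := by
    intro u h; rw [hpm u h]; exact ((Pp u h).getVert 1).2
  have hadjpm : ∀ u (h : u ∈ N), T.Adj (pm u) u := by
    intro u h; rw [hpm u h]; exact (hpf u h).1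
  have hpmne : ∀ u (h : u ∈ N), pm u ≠ x → ¬ T.Adj x u := by
    intro u h hne hTadj
    apply hne
    rw [hpm u h, (hpf u h).2.1 hTadj]
  have hds2 : ∀ u (h : u ∈ N), pm u ≠ x → 2 ≤ dS T (pm u) := by
    intro u h hne
    have hgv : (Pp u h).getVert 1 ≠ ⟨x, hxT⟩ := by
      intro heq; apply hne; rw [hpm u h, heq]
    have := (hpf u h).2.2.1 hgv
    rwa [← hpm u h] at this
  have hreachpm : ∀ u (h : u ∈ N),
      (T.spanningCoe.deleteEdges {s(pm u, u)}).Reachable x (pm u) := by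
    intro u h
    have := (hpf u h).2.2.2
    rw [hpm u h]
    exact this
  by_cases hinj : ∃ u1, ∃ h1 : u1 ∈ N, ∃ u2, ∃ h2 : u2 ∈ N, u1 ≠ u2 ∧ pm u1 = pm u2
  · -- Case 3a : two neighbours of x share a parent p ; exchange and attach w at v
    obtain ⟨u1, h1, u2, h2, h12, hpp⟩ := hinj
    have hxu1 : G.Adj x u1 := h1
    have hpx : pm u1 ≠ x := by
      intro hpxeq
      have ha1 : T.Adj x u1 := hpxeq ▸ hadjpm u1 h1
      have ha2 : T.Adj x u2 := (hpp ▸ hpxeq : pm u2 = x) ▸ hadjpm u2 h2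
      have hle2 : 2 ≤ dS T x := by
        refine le_trans ?_ (Set.ncard_le_ncard (s := {u1, u2}) ?_ (Set.toFinite _))
        · rw [Set.ncard_pair h12]
        · rintro z (rfl | rfl)
          · exact ha1
          · exact ha2
      omega
    have h3le : 3 ≤ dS T (pm u1) := by
      have hgv12 : (Pp u1 h1).getVert 1 = (Pp u2 h2).getVert 1 := by
        apply Subtype.val_injective
        rw [← hpm u1 h1, ← hpm u2 h2]; exact hpp
      have hgva : (Pp u1 h1).getVert 1 ≠ ⟨x, hxT⟩ := by
        intro heq; exact hpx (by rw [hpm u1 h1, heq])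
      have hb12 : (⟨u1, hNT u1 h1⟩ : T.verts) ≠ ⟨u2, hNT u2 h2⟩ :=
        fun heq => h12 (congrArg Subtype.val heq)
      have := parent_inj htree (hbne u1 h1) (hbne u2 h2) hb12 (Pp u1 h1) (hPp u1 h1)
        (Pp u2 h2) (hPp u2 h2) hgv12 hgva
      rwa [← hpm u1 h1] at this
    obtain ⟨hc2, hac2, hvv2, hdsx2, hdsu2, hdsp2, hnz2⟩ :=
      exchange_lemma hc hac hxu1 (hadjpm u1 h1) (hpmne u1 h1 hpx) hpx hxT (hreachpm u1 h1)
    set T2 := T.deleteEdges {s(pm u1, u1)} ⊔ G.subgraphOfAdj hxu1 with hT2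
    have hl2 : leaves T2 ⊆ leaves T \ {x} := by
      rintro z ⟨hzv, hz1⟩
      rw [hvv2] at hzv
      by_cases hzx : z = x
      · subst hzx; rw [hdsx2] at hz1; omega
      by_cases hzp : z = pm u1
      · subst hzp; rw [hdsp2] at hz1; omega
      by_cases hzu : z = u1
      · subst hzu; rw [hdsu2] at hz1; exact ⟨⟨hzv, hz1⟩, hzx⟩
      · have heq : dS T2 z = dS T z := congrArg Set.ncard (hnz2 z hzx hzu hzp)
        rw [heq] at hz1
        exact ⟨⟨hzv, hz1⟩, hzx⟩
    have hv2 : v ∈ T2.verts := by rw [hvv2]; exact hdv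
    have hw2 : w ∉ T2.verts := by rw [hvv2]; exact hdw
    have hds2v : 1 ≤ dS T2 v := by
      have hne2 : ∃ b ∈ T2.verts, b ≠ v := by
        rcases eq_or_ne v x with rfl | hvx
        · exact ⟨u1, by rw [hvv2]; exact hNT u1 h1, hNx u1 h1⟩
        · exact ⟨x, by rw [hvv2]; exact hxT, fun hh => hvx hh.symm⟩
      obtain ⟨b, hb, hbv⟩ := hne2
      have hne3 := nbr_nonempty hc2 hv2 hb (fun hh => hbv hh.symm)
      have h0 : 0 < (T2.neighborSet v).ncard := (Set.ncard_pos (Set.toFinite _)).2 hne3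
      exact h0
    obtain ⟨hc3, hac3, hverts3, _, hsub3⟩ := attach_lemma hc2 hac2 hvw hv2 hw2
    refine ⟨_, hc3, hac3, ?_, ?_⟩
    · have hss : leaves (T2 ⊔ G.subgraphOfAdj hvw) ⊆ insert w (leaves T \ {x}) := by
        intro z hz
        rcases hsub3 hds2v hz with rfl | ⟨hz2, _⟩
        · exact Set.mem_insert _ _
        · exact Set.mem_insert_of_mem _ (hl2 hz2)
      have hb1 := Set.ncard_le_ncard hss (Set.toFinite _)
      have hb2 := Set.ncard_insert_le w (leaves T \ {x})
      have hb3 := Set.ncard_diff_singleton_of_mem hxL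
      omega
    · rw [hverts3, hvv2]; exact Set.ssubset_insert hdw
  by_cases hwp : ∃ u, ∃ h : u ∈ N, G.Adj w (pm u)
  · -- Case 3b : w is adjacent to the parent p of some neighbour u of x
    obtain ⟨u, hu, hwpu⟩ := hwp
    have hxu : G.Adj x u := hu
    have hpx : pm u ≠ x := by
      intro heq; rw [heq] at hwpu; exact hxw hwpu.symm
    obtain ⟨hc2, hac2, hvv2, hdsx2, hdsu2, hdsp2, hnz2⟩ :=
      exchange_lemma hc hac hxu (hadjpm u hu) (hpmne u hu hpx) hpx hxT (hreachpm u hu)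
    set T2 := T.deleteEdges {s(pm u, u)} ⊔ G.subgraphOfAdj hxu with hT2
    have hl2 : leaves T2 \ {pm u} ⊆ leaves T \ {x} := by
      rintro z ⟨⟨hzv, hz1⟩, hzpm⟩
      rw [hvv2] at hzv
      have hzp : z ≠ pm u := hzpm
      by_cases hzx : z = x
      · subst hzx; rw [hdsx2] at hz1; omega
      by_cases hzu : z = u
      · subst hzu; rw [hdsu2] at hz1; exact ⟨⟨hzv, hz1⟩, hzx⟩
      · have heq : dS T2 z = dS T z := congrArg Set.ncard (hnz2 z hzx hzu hzp)
        rw [heq] at hz1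
        exact ⟨⟨hzv, hz1⟩, hzx⟩
    have hp2 : pm u ∈ T2.verts := by rw [hvv2]; exact hpmT u hu
    have hw2 : w ∉ T2.verts := by rw [hvv2]; exact hdw
    have hds2p : 1 ≤ dS T2 (pm u) := by
      rw [hdsp2]
      have := hds2 u hu hpx
      omega
    obtain ⟨hc3, hac3, hverts3, _, hsub3⟩ := attach_lemma hc2 hac2 hwpu.symm hp2 hw2
    refine ⟨_, hc3, hac3, ?_, ?_⟩
    · have hss : leaves (T2 ⊔ G.subgraphOfAdj hwpu.symm) ⊆ insert w (leaves T \ {x}) := by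
        intro z hz
        rcases hsub3 hds2p hz with rfl | hz2
        · exact Set.mem_insert _ _
        · exact Set.mem_insert_of_mem _ (hl2 hz2)
      have hb1 := Set.ncard_le_ncard hss (Set.toFinite _)
      have hb2 := Set.ncard_insert_le w (leaves T \ {x})
      have hb3 := Set.ncard_diff_singleton_of_mem hxL
      omega
    · rw [hverts3, hvv2]; exact Set.ssubset_insert hdw
  -- Case 3c : contradiction with the degree hypothesis
  exfalso
  push_neg at hinj hwp
  have hinjOn : Set.InjOn pm N := by
    intro u1 h1 u2 h2 heq
    by_contra hne12
    exact hinj u1 h1 u2 h2 hne12 heq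
  set S := pm '' N with hS
  have hScard : S.ncard = degG G x := by
    rw [hS, Set.ncard_image_of_injOn hinjOn, hN]
    rfl
  set L := leaves T \ {x} with hL
  have hLcard : L.ncard = k - 1 := by
    rw [hL, Set.ncard_diff_singleton_of_mem hxL, hkeq]
  have hdisj : Disjoint S L := by
    rw [Set.disjoint_left]
    rintro s ⟨u, hu, rfl⟩ ⟨hsL, hsx⟩
    have h2d : 2 ≤ dS T (pm u) := hds2 u hu (fun hh => hsx hh)
    have h1d : dS T (pm u) = 1 := hsL.2
    omega
  have hwSL : w ∉ S ∪ L := by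
    rintro (hS' | hL')
    · obtain ⟨u, hu, heq⟩ := hS'
      exact hdw (heq ▸ hpmT u hu)
    · exact hdw hL'.1.1
  set A := insert w (S ∪ L) with hA
  have hAcard : A.ncard = S.ncard + L.ncard + 1 := by
    rw [hA, Set.ncard_insert_of_notMem hwSL (Set.toFinite _),
      Set.ncard_union_eq hdisj (Set.toFinite _) (Set.toFinite _)]
  have hnbw : G.neighborSet w ⊆ Set.univ \ A := by
    intro z hz
    have hzadj : G.Adj w z := hz
    refine ⟨Set.mem_univ z, ?_⟩
    rw [hA]
    rintro (rfl | (⟨u, hu, rfl⟩ | hzL))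
    · exact G.irrefl hzadj
    · exact hwp u hu hzadj
    · exact hdw (hout z hzL.1 w hzadj.symm)
  have hdegw : degG G w + A.ncard ≤ Fintype.card V := by
    have hb1 : (G.neighborSet w).ncard ≤ (Set.univ \ A).ncard :=
      Set.ncard_le_ncard hnbw (Set.toFinite _)
    have hb2 : (Set.univ \ A).ncard = (Set.univ : Set V).ncard - A.ncard :=
      Set.ncard_diff (Set.subset_univ A) (Set.toFinite _)
    have hb3 : (Set.univ : Set V).ncard = Fintype.card V := by
      rw [Set.ncard_univ, Nat.card_eq_fintype_card]
    have hb4 : A.ncard ≤ (Set.univ : Set V).ncard :=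
      Set.ncard_le_ncard (Set.subset_univ _) (Set.toFinite _)
    have hb5 : degG G w = (G.neighborSet w).ncard := rfl
    omega
  have hfin := hdeg x w hxnew hxw
  have hnat : degG G x + degG G w + k ≤ Fintype.card V := by omega
  omega

lemma coe_nbr_ncard (T : G.Subgraph) (v : T.verts) :
    (T.coe.neighborSet v).ncard = dS T ↑v := by
  rw [dS, ← Set.ncard_image_of_injOn (Subtype.val_injective.injOn)]
  congr 1
  ext z
  simp only [Set.mem_image, mem_neighborSet, Subgraph.coe_adj]
  constructor
  · rintro ⟨w', hw', rfl⟩; exact hw'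
  · intro h; exact ⟨⟨z, T.edge_vert (T.adj_symm h)⟩, h, rfl⟩

lemma leafCount_eq (T : G.Subgraph) : leafCount T = (leaves T).ncard := by
  rw [leafCount, ← Set.ncard_image_of_injOn (Subtype.val_injective.injOn)]
  congr 1
  ext z
  simp only [Set.mem_image, Set.mem_setOf_eq]
  constructor
  · rintro ⟨v', hv', rfl⟩
    exact ⟨v'.2, by rw [← coe_nbr_ncard T v']; exact hv'⟩
  · rintro ⟨hz, h2⟩
    exact ⟨⟨z, hz⟩, by rw [coe_nbr_ncard T ⟨z, hz⟩]; exact h2, rfl⟩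

end BT

theorem BT.spanning_k_ended_tree_aux {V : Type*} [Fintype V] (k : ℕ) (hk : 2 ≤ k)
    (G : SimpleGraph V) (hconn : G.Connected)
    (hdeg : ∀ x y : V, x ≠ y → ¬ G.Adj x y →
      (Fintype.card V : ℤ) - k + 1 ≤ (deg G x : ℤ) + deg G y) :
    ∃ H : G.Subgraph, H.IsSpanning ∧ IsEndedTree H k := by
  classical
  have hdeg' : ∀ x y : V, x ≠ y → ¬ G.Adj x y →
      (Fintype.card V : ℤ) - k + 1 ≤ (BT.degG G x : ℤ) + BT.degG G y := hdeg
  obtain ⟨v0⟩ := hconn.nonempty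
  have main : ∀ (m : ℕ) (T : G.Subgraph), T.Connected → T.spanningCoe.IsAcyclic →
      (BT.leaves T).ncard ≤ k → (T.vertsᶜ).ncard ≤ m →
      ∃ H : G.Subgraph, H.IsSpanning ∧ IsEndedTree H k := by
    intro m
    induction m with
    | zero =>
      intro T h1 h2 h3 h4
      have hsp : T.IsSpanning := by
        intro z
        by_contra hz
        have hmem : z ∈ T.vertsᶜ := hz
        have hzero : (T.vertsᶜ).ncard = 0 := Nat.le_zero.mp h4
        rw [Set.ncard_eq_zero (Set.toFinite _)] at hzero
        rw [hzero] at hmem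
        exact hmem
      exact ⟨T, hsp, BT.coe_isTree h1 h2, by rw [BT.leafCount_eq]; exact h3⟩
    | succ m ih =>
      intro T h1 h2 h3 h4
      by_cases hsp : T.IsSpanning
      · exact ⟨T, hsp, BT.coe_isTree h1 h2, by rw [BT.leafCount_eq]; exact h3⟩
      · obtain ⟨T', hc', hac', hl', hss⟩ := BT.grow k hk hconn hdeg' T h1 h2 h3 hsp
        apply ih T' hc' hac' hl'
        have hsub : T'.vertsᶜ ⊂ T.vertsᶜ := by
          constructor
          · exact Set.compl_subset_compl.2 hss.1
          · intro hcon
            have : T.vertsᶜ = T'.vertsᶜ := le_antisymm hcon (Set.compl_subset_compl.2 hss.1)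
            have : T.verts = T'.verts := by
              rw [← compl_compl T.verts, ← compl_compl T'.verts, this]
            exact hss.2 (this ▸ subset_rfl)
        have := Set.ncard_lt_ncard hsub (Set.toFinite _)
        omega
  apply main (Fintype.card V) (G.singletonSubgraph v0)
  · exact SimpleGraph.Subgraph.singletonSubgraph_connected
  · have hbot : (G.singletonSubgraph v0).spanningCoe = ⊥ := by
      ext a b
      simp [SimpleGraph.singletonSubgraph]
    rw [hbot]
    exact SimpleGraph.isAcyclic_bot
  · have : BT.leaves (G.singletonSubgraph v0) = ∅ := by
      ext z
      simp only [Set.mem_empty_iff_false, iff_false]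
      rintro ⟨hzv, hz1⟩
      have : (G.singletonSubgraph v0).neighborSet z = ∅ := by
        ext y
        simp [SimpleGraph.singletonSubgraph]
      rw [BT.dS, this, Set.ncard_empty] at hz1
      exact one_ne_zero hz1.symm
    rw [this, Set.ncard_empty]
    omega
  · calc ((G.singletonSubgraph v0).vertsᶜ).ncard ≤ (Set.univ : Set V).ncard :=
        Set.ncard_le_ncard (Set.subset_univ _) (Set.toFinite _)
    _ = Fintype.card V := by rw [Set.ncard_univ, Nat.card_eq_fintype_card]


/-- If `k ≥ 2`, `G` is connected of order `n` and `d(x) + d(y) ≥ n - k + 1`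
for every pair of nonadjacent vertices, then `G` has a spanning tree with at most `k`
leaves. -/
theorem spanning_k_ended_tree {V : Type*} [Fintype V] (k : ℕ) (hk : 2 ≤ k)
    (G : SimpleGraph V) (hconn : G.Connected)
    (hdeg : ∀ x y : V, x ≠ y → ¬ G.Adj x y →
      (Fintype.card V : ℤ) - k + 1 ≤ (deg G x : ℤ) + deg G y) :
    ∃ H : G.Subgraph, H.IsSpanning ∧ IsEndedTree H k := by
  exact BT.spanning_k_ended_tree_aux k hk G hconn hdeg
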